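/- Let k be a field of characteristic zero and let D = P·∂/∂x + Q·∂/∂y be a derivation of k[x,y] with gcd(P,Q) = 1. If there exists a non-constant polynomial u ∈ k[x,y] with D(u) = 0, then there exists a nonzero polynomial h ∈ k[x,y] such that ∂u/∂x = h·Q and ∂u/∂y = -h·P (equivalently, h·D equals the Hamiltonian derivation D_u = -(∂u/∂y)·∂/∂x + (∂u/∂x)·∂/∂y). -/

import Mathlib

open MvPolynomial

lemma aux_single {s m : Fin 2 →₀ ℕ} {i : Fin 2} :
    s = m + Finsupp.single i 1 ↔ (s - Finsupp.single i 1 = m ∧ s i ≠ 0) := by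
  constructor
  · rintro rfl
    refine ⟨add_tsub_cancel_right _ _, ?_⟩
    simp
  · rintro ⟨rfl, h⟩
    exact (tsub_add_cancel_of_le (Finsupp.single_le_iff.mpr (by omega))).symm

lemma coeff_pderiv {k : Type*} [CommRing k] (i : Fin 2) (m : Fin 2 →₀ ℕ)
    (f : MvPolynomial (Fin 2) k) :
    coeff m (pderiv i f) = (m i + 1 : ℕ) * coeff (m + Finsupp.single i 1) f := by
  induction f using MvPolynomial.induction_on' with
  | monomial s a =>
    rw [pderiv_monomial, coeff_monomial, coeff_monomial]
    by_cases h : s = m + Finsupp.single i 1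
    · rw [if_pos (aux_single.mp h).1, if_pos h]
      have hsi : s i = m i + 1 := by
        subst h
        simp
      rw [hsi]
      push_cast
      ring
    · rw [if_neg h, mul_zero]
      by_cases h2 : s - Finsupp.single i 1 = m
      · rw [if_pos h2]
        have hsi : s i = 0 := by
          by_contra h3
          exact h (aux_single.mpr ⟨h2, h3⟩)
        rw [hsi]
        simp
      · rw [if_neg h2]
  | add p q hp hq =>
    simp [map_add, coeff_add, hp, hq, mul_add]

lemma const_of_pderiv_zero {k : Type*} [Field k] [CharZero k]
    (u : MvPolynomial (Fin 2) k) (h0 : pderiv 0 u = 0) (h1 : pderiv 1 u = 0) :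
    ∃ c : k, u = C c := by
  refine ⟨coeff 0 u, ?_⟩
  ext m
  rcases eq_or_ne m 0 with rfl | hm
  · simp
  · rw [coeff_C, if_neg (by exact fun h => hm h.symm)]
    obtain ⟨i, hi⟩ : ∃ i, m i ≠ 0 := by
      by_contra h
      push_neg at h
      exact hm (by ext j; simp [h j])
    have hz : pderiv i u = 0 := by
      fin_cases i
      · exact h0
      · exact h1
    have key : coeff (m - Finsupp.single i 1) (pderiv i u) = 0 := by
      rw [hz]; simp
    rw [_root_.coeff_pderiv] at key
    have hmm : m - Finsupp.single i 1 + Finsupp.single i 1 = m :=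
      tsub_add_cancel_of_le (Finsupp.single_le_iff.mpr (by omega))
    rw [hmm] at key
    have h2 : ((((m - Finsupp.single i 1 : Fin 2 →₀ ℕ) i + 1 : ℕ)) : k) ≠ 0 :=
      Nat.cast_ne_zero.mpr (Nat.succ_ne_zero _)
    exact (mul_eq_zero.mp key).resolve_left h2

/-- If a reduced derivation `D = P ∂/∂x + Q ∂/∂y` of `k[x,y]` annihilates a
non-constant polynomial `u`, then there is a nonzero `h` with
`∂u/∂x = h·Q` and `∂u/∂y = -h·P`, i.e. `h·D = D_u`. -/
theorem reduced_derivation_with_kernel_is_multiple_of_hamiltonian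
    {k : Type*} [Field k] [CharZero k]
    (P Q u : MvPolynomial (Fin 2) k)
    (hred : ∀ d : MvPolynomial (Fin 2) k, d ∣ P → d ∣ Q → IsUnit d)
    (hu : ∀ c : k, u ≠ C c)
    (hDu : P * pderiv 0 u + Q * pderiv 1 u = 0) :
    ∃ h : MvPolynomial (Fin 2) k, h ≠ 0 ∧
      pderiv 0 u = h * Q ∧ pderiv 1 u = -(h * P) := by
  rcases eq_or_ne Q 0 with rfl | hQ0
  · have hP : IsUnit P := hred P dvd_rfl (dvd_zero P)
    have hux : pderiv 0 u = 0 := by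
      rw [zero_mul, add_zero] at hDu
      exact (mul_eq_zero.mp hDu).resolve_left hP.ne_zero
    have huy : pderiv 1 u ≠ 0 := by
      intro h1
      obtain ⟨c, hc⟩ := const_of_pderiv_zero u hux h1
      exact hu c hc
    obtain ⟨v, hv⟩ := hP
    refine ⟨-(pderiv 1 u) * (↑v⁻¹ : MvPolynomial (Fin 2) k), ?_, ?_, ?_⟩
    · intro h0
      rcases mul_eq_zero.mp h0 with h | h
      · exact huy (neg_eq_zero.mp h)
      · exact (Units.ne_zero v⁻¹) h
    · rw [mul_zero, hux]
    · rw [neg_mul, neg_mul, neg_neg, mul_assoc, ← hv, Units.inv_mul, mul_one]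
  · have hrel : IsRelPrime Q P := fun d hQ hP => hred d hP hQ
    have hdvd : Q ∣ pderiv 0 u * P := ⟨-(pderiv 1 u), by linear_combination hDu⟩
    obtain ⟨h, hh⟩ := hrel.dvd_of_dvd_mul_right hdvd
    have huy : pderiv 1 u = -(h * P) := by
      have hq : Q * (pderiv 1 u + h * P) = 0 := by
        linear_combination hDu - P * hh
      rcases mul_eq_zero.mp hq with h' | h'
      · exact absurd h' hQ0
      · linear_combination h'
    refine ⟨h, ?_, by rw [hh, mul_comm], huy⟩
    intro h0
    subst h0
    rw [mul_zero] at hh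
    rw [zero_mul, neg_zero] at huy
    obtain ⟨c, hc⟩ := const_of_pderiv_zero u hh huy
    exact hu c hc
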